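/- For every n ≥ 2, the matrix P ∈ ℝ^{2^n × 2^n} is invertible. -/

import Mathlib

/-- Hamming distance between the `n`-bit binary representations of `i` and `j`. -/
def hamD (n i j : ℕ) : ℕ :=
  ((Finset.range n).filter (fun p => i.testBit p ≠ j.testBit p)).card

/-- Number of bit positions where `i` and `j` both have bit 1. -/
def hamC (n i j : ℕ) : ℕ :=
  ((Finset.range n).filter (fun p => i.testBit p ∧ j.testBit p)).card

/-- `F α = ((1+√2)^α − (1−√2)^α)/(2√2)` with integer powers. -/
noncomputable def Ffun (α : ℤ) : ℝ :=
  ((1 + Real.sqrt 2) ^ α - (1 - Real.sqrt 2) ^ α) / (2 * Real.sqrt 2)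

/-- The matrix `P`: writing `i = i₀ + a` and `k = k₀ + b` with `a b` the least significant
bits, `P i k = (−1)^(c(i₀,k₀)) * F(d(i₀,k₀) − 1 + a + b)`. -/
noncomputable def Pmat (n : ℕ) : Matrix (Fin (2 ^ n)) (Fin (2 ^ n)) ℝ := fun i k =>
  (-1 : ℝ) ^ hamC n ((i : ℕ) - (i : ℕ) % 2) ((k : ℕ) - (k : ℕ) % 2) *
    Ffun ((hamD n ((i : ℕ) - (i : ℕ) % 2) ((k : ℕ) - (k : ℕ) % 2) : ℤ) - 1
      + (i : ℕ) % 2 + (k : ℕ) % 2)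

open Finset

noncomputable def rx : ℝ := 1 + Real.sqrt 2
noncomputable def ry : ℝ := 1 - Real.sqrt 2

lemma hs2 : Real.sqrt 2 ^ 2 = 2 := Real.sq_sqrt (by norm_num)

lemma hxy : rx * ry = -1 := by
  unfold rx ry; linear_combination -hs2

lemma hrx : rx ≠ 0 := by
  unfold rx; positivity

lemma hry : ry ≠ 0 := by
  intro h
  have : rx * ry = -1 := hxy
  rw [h, mul_zero] at this; norm_num at this

lemma h8 : (1 + rx ^ 2) * (1 + ry ^ 2) = 8 := by
  unfold rx ry; linear_combination (Real.sqrt 2 ^ 2 + 2) * hs2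

lemma hss : (2 * Real.sqrt 2) * (2 * Real.sqrt 2) = 8 := by
  linear_combination 4 * hs2

lemma hs0 : (2 * Real.sqrt 2) ≠ 0 := by
  intro h
  have h2 := hss
  rw [h] at h2; norm_num at h2

lemma rx_inv : rx⁻¹ = -ry := by
  have : rx * (-ry) = 1 := by linear_combination -hxy
  exact inv_eq_of_mul_eq_one_right this

lemma ry_inv : ry⁻¹ = -rx := by
  have : ry * (-rx) = 1 := by linear_combination -hxy
  exact inv_eq_of_mul_eq_one_right this

lemma Ffun_sub_one (s : ℕ) :
    Ffun ((s : ℤ) - 1) = (rx * ry ^ s - ry * rx ^ s) / (2 * Real.sqrt 2) := by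
  unfold Ffun
  rw [zpow_sub_one₀ (show (1:ℝ) + Real.sqrt 2 ≠ 0 from hrx) (s:ℤ),
      zpow_sub_one₀ (show (1:ℝ) - Real.sqrt 2 ≠ 0 from hry) (s:ℤ)]
  rw [zpow_natCast, zpow_natCast]
  rw [show ((1:ℝ) + Real.sqrt 2)⁻¹ = -ry from rx_inv,
      show ((1:ℝ) - Real.sqrt 2)⁻¹ = -rx from ry_inv]
  show ((rx:ℝ) ^ s * -ry - ry ^ s * -rx) / _ = _
  ring

/-- bit recursion for hamC -/
lemma hamC_succ (m u v a b : ℕ) (ha : a < 2) (hb : b < 2) :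
    hamC (m + 1) (2 * u + a) (2 * v + b) = hamC m u v + a * b := by
  unfold hamC
  rw [Finset.card_filter, Finset.card_filter, Finset.sum_range_succ']
  congr 1
  · apply Finset.sum_congr rfl
    intro p _
    rw [Nat.testBit_succ, Nat.testBit_succ,
        show (2 * u + a) / 2 = u by omega, show (2 * v + b) / 2 = v by omega]
  · rw [Nat.testBit_zero, Nat.testBit_zero,
        show (2 * u + a) % 2 = a by omega, show (2 * v + b) % 2 = b by omega]
    interval_cases a <;> interval_cases b <;> simp

lemma hamD_succ (m u v a b : ℕ) (ha : a < 2) (hb : b < 2) :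
    hamD (m + 1) (2 * u + a) (2 * v + b) = hamD m u v + (if a = b then 0 else 1) := by
  unfold hamD
  rw [Finset.card_filter, Finset.card_filter, Finset.sum_range_succ']
  congr 1
  · apply Finset.sum_congr rfl
    intro p _
    rw [Nat.testBit_succ, Nat.testBit_succ,
        show (2 * u + a) / 2 = u by omega, show (2 * v + b) / 2 = v by omega]
  · rw [Nat.testBit_zero, Nat.testBit_zero,
        show (2 * u + a) % 2 = a by omega, show (2 * v + b) % 2 = b by omega]
    interval_cases a <;> interval_cases b <;> simp

lemma sum_double (N : ℕ) (f : ℕ → ℝ) :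
    ∑ t ∈ range (2 * N), f t = ∑ v ∈ range N, (f (2 * v) + f (2 * v + 1)) := by
  induction N with
  | zero => simp
  | succ N ih =>
      rw [show 2 * (N + 1) = (2 * N + 1) + 1 by ring, Finset.sum_range_succ,
          Finset.sum_range_succ, Finset.sum_range_succ, ih]
      rw [add_assoc]

noncomputable def gf (x : ℝ) (m i j : ℕ) : ℝ := (-1) ^ hamC m i j * x ^ hamD m i j

lemma gf_succ (x : ℝ) (m u v a b : ℕ) (ha : a < 2) (hb : b < 2) :
    gf x (m + 1) (2 * u + a) (2 * v + b)
      = gf x m u v * ((-1) ^ (a * b) * x ^ (if a = b then 0 else 1)) := by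
  unfold gf
  rw [hamC_succ m u v a b ha hb, hamD_succ m u v a b ha hb, pow_add, pow_add]
  ring

lemma gsum (x : ℝ) (m : ℕ) : ∀ i k : ℕ, i < 2 ^ m → k < 2 ^ m →
    ∑ j ∈ range (2 ^ m), gf x m i j * gf x m j k
      = if i = k then (1 + x ^ 2) ^ m else 0 := by
  induction m with
  | zero =>
      intro i k hi hk
      interval_cases i; interval_cases k
      simp [gf, hamC, hamD]
  | succ m ih =>
      intro i k hi hk
      have h2 : (2:ℕ) ^ (m + 1) = 2 * 2 ^ m := by rw [pow_succ]; ring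
      obtain ⟨u, a, ha, hu, rfl⟩ : ∃ u a, a < 2 ∧ u < 2 ^ m ∧ i = 2 * u + a :=
        ⟨i / 2, i % 2, by omega, by omega, by omega⟩
      obtain ⟨w, c, hc, hw, rfl⟩ : ∃ w c, c < 2 ∧ w < 2 ^ m ∧ k = 2 * w + c :=
        ⟨k / 2, k % 2, by omega, by omega, by omega⟩
      rw [h2, sum_double]
      have key : ∀ v : ℕ,
          (gf x (m+1) (2*u+a) (2*v) * gf x (m+1) (2*v) (2*w+c)
           + gf x (m+1) (2*u+a) (2*v+1) * gf x (m+1) (2*v+1) (2*w+c))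
          = (if a = c then 1 + x ^ 2 else 0) * (gf x m u v * gf x m v w) := by
        intro v
        rw [show (2*v : ℕ) = 2*v+0 by ring] -- normalize
        rw [gf_succ x m u v a 0 ha (by norm_num), gf_succ x m v w 0 c (by norm_num) hc,
            gf_succ x m u v a 1 ha (by norm_num), gf_succ x m v w 1 c (by norm_num) hc]
        interval_cases a <;> interval_cases c <;> simp <;> ring
      calc ∑ v ∈ range (2^m),
            (gf x (m+1) (2*u+a) (2*v) * gf x (m+1) (2*v) (2*w+c)
             + gf x (m+1) (2*u+a) (2*v+1) * gf x (m+1) (2*v+1) (2*w+c))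
          = ∑ v ∈ range (2^m), (if a = c then 1 + x ^ 2 else 0) * (gf x m u v * gf x m v w) := by
            exact Finset.sum_congr rfl (fun v _ => key v)
        _ = (if a = c then 1 + x ^ 2 else 0) * ∑ v ∈ range (2^m), gf x m u v * gf x m v w := by
            rw [Finset.mul_sum]
        _ = _ := by
            rw [ih u w hu hw]
            by_cases hac : a = c
            · by_cases huw : u = w
              · rw [if_pos hac, if_pos huw, if_pos (by omega), pow_succ]; ring
              · rw [if_pos hac, if_neg huw, if_neg (by omega), mul_zero]
            · have hne : 2 * u + a ≠ 2 * w + c := fun h => hac (by omega)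
              rw [if_neg hac, if_neg hne, zero_mul]

noncomputable def Pval (n i k : ℕ) : ℝ :=
  (-1 : ℝ) ^ hamC n (i - i % 2) (k - k % 2) *
    Ffun ((hamD n (i - i % 2) (k - k % 2) : ℤ) - 1 + (i % 2 : ℕ) + (k % 2 : ℕ))

lemma Pval_eq (m i' a k' b : ℕ) (ha : a < 2) (hb : b < 2) :
    Pval (m + 1) (2 * i' + a) (2 * k' + b)
      = (rx * (gf ry m i' k' * ry ^ (a + b)) - ry * (gf rx m i' k' * rx ^ (a + b)))
          / (2 * Real.sqrt 2) := by
  unfold Pval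
  rw [show (2 * i' + a) % 2 = a by omega, show (2 * k' + b) % 2 = b by omega,
      show 2 * i' + a - a = 2 * i' + 0 by omega, show 2 * k' + b - b = 2 * k' + 0 by omega,
      hamC_succ m i' k' 0 0 (by norm_num) (by norm_num),
      hamD_succ m i' k' 0 0 (by norm_num) (by norm_num)]
  norm_num
  rw [show ((hamD m i' k' : ℤ) - 1 + a + b) = ((hamD m i' k' + a + b : ℕ) : ℤ) - 1 by
        push_cast; ring,
      Ffun_sub_one]
  unfold gf
  rw [pow_add, pow_add, pow_add, pow_add]
  ring

noncomputable def Mval (n s : ℕ) : ℝ :=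
  ((1 + rx ^ 2) ^ n * ry ^ 2 * rx ^ s + (1 + ry ^ 2) ^ n * rx ^ 2 * ry ^ s) / 8

/-- The key computation: `P² = block diagonal`. -/
lemma Psq (m : ℕ) (i k : ℕ) (hi : i < 2 ^ (m + 1)) (hk : k < 2 ^ (m + 1)) :
    ∑ t ∈ range (2 ^ (m + 1)), Pval (m + 1) i t * Pval (m + 1) t k
      = if i - i % 2 = k - k % 2 then Mval (m + 1) (i % 2 + k % 2) else 0 := by
  have h2 : (2:ℕ) ^ (m + 1) = 2 * 2 ^ m := by rw [pow_succ]; ring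
  obtain ⟨i', a, ha, hi', rfl⟩ : ∃ u a, a < 2 ∧ u < 2 ^ m ∧ i = 2 * u + a :=
    ⟨i / 2, i % 2, by omega, by omega, by omega⟩
  obtain ⟨k', b, hb, hk', rfl⟩ : ∃ w c, c < 2 ∧ w < 2 ^ m ∧ k = 2 * w + c :=
    ⟨k / 2, k % 2, by omega, by omega, by omega⟩
  rw [h2, sum_double]
  have key : ∀ j' : ℕ,
      (Pval (m+1) (2*i'+a) (2*j') * Pval (m+1) (2*j') (2*k'+b)
       + Pval (m+1) (2*i'+a) (2*j'+1) * Pval (m+1) (2*j'+1) (2*k'+b))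
      = (rx ^ 2 * ry ^ (a + b) * (1 + ry ^ 2) / 8) * (gf ry m i' j' * gf ry m j' k')
        + (ry ^ 2 * rx ^ (a + b) * (1 + rx ^ 2) / 8) * (gf rx m i' j' * gf rx m j' k') := by
    intro j'
    rw [show (2*j' : ℕ) = 2*j'+0 by ring]
    rw [Pval_eq m i' a j' 0 ha (by norm_num), Pval_eq m j' 0 k' b (by norm_num) hb,
        Pval_eq m i' a j' 1 ha (by norm_num), Pval_eq m j' 1 k' b (by norm_num) hb]
    rw [div_mul_div_comm, div_mul_div_comm, hss, ← add_div]
    set Gx := gf rx m i' j'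
    set Gy := gf ry m i' j'
    set Gx' := gf rx m j' k'
    set Gy' := gf ry m j' k'
    linear_combination (-(rx*ry) * (Gy * Gx' * (ry^a * rx^b) + Gx * Gy' * (rx^a * ry^b)) / 8) * hxy
  rw [Finset.sum_congr rfl (fun v _ => key v), Finset.sum_add_distrib,
      ← Finset.mul_sum, ← Finset.mul_sum, gsum ry m i' k' hi' hk', gsum rx m i' k' hi' hk']
  rw [show (2*i'+a) % 2 = a by omega, show (2*k'+b) % 2 = b by omega,
      show 2*i'+a - a = 2*i' by omega, show 2*k'+b - b = 2*k' by omega]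
  by_cases h : i' = k'
  · rw [if_pos h, if_pos h, if_pos (by omega)]
    unfold Mval
    rw [pow_succ, pow_succ]
    ring
  · rw [if_neg h, if_neg h, if_neg (by omega)]
    ring

noncomputable def Nval (n a b : ℕ) : ℝ :=
  (if a = b then 1 else -1) * Mval n (2 - a - b) / 8 ^ (n - 1)

lemma h6 : rx ^ 2 + ry ^ 2 = 6 := by
  linear_combination h8 + (1 - rx * ry) * hxy

lemma MN (p : ℕ) (a b : ℕ) (ha : a < 2) (hb : b < 2) :
    Mval (p + 1) (a + 0) * Nval (p + 1) 0 b + Mval (p + 1) (a + 1) * Nval (p + 1) 1 b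
      = if a = b then 1 else 0 := by
  have h80 : (8:ℝ) ^ p ≠ 0 := by positivity
  have hAB : (1 + rx ^ 2) ^ (p+1) * (1 + ry ^ 2) ^ (p+1) = 8 ^ (p+1) := by
    rw [← mul_pow, h8]
  have hpow : (8:ℝ) ^ (p + 1) = 8 ^ p * 8 := by rw [pow_succ]
  have hUV : ((1 + rx ^ 2) ^ (p+1) * ry ^ 2) * ((1 + ry ^ 2) ^ (p+1) * rx ^ 2)
      = 8 * 8 ^ p := by
    linear_combination (rx*ry)^2 * hAB + (rx*ry)^2 * hpow + (8 * 8^p * (rx*ry - 1)) * hxy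
  have hKey : Mval (p+1) 0 * Mval (p+1) 2 - Mval (p+1) 1 * Mval (p+1) 1 = 8 ^ p := by
    unfold Mval
    set U := (1 + rx ^ 2) ^ (p+1) * ry ^ 2 with hU
    set V := (1 + ry ^ 2) ^ (p+1) * rx ^ 2 with hV
    have hUV' : U * V = 8 * 8 ^ p := hUV
    linear_combination (U*V/64)*h6 + (-2*U*V/64)*hxy + (8/64)*hUV'
  have hD : (8:ℝ) ^ ((p+1) - 1) = 8 ^ p := rfl
  interval_cases a <;> interval_cases b
  · have e : Mval (p+1) (0+0) * Nval (p+1) 0 0 + Mval (p+1) (0+1) * Nval (p+1) 1 0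
        = (Mval (p+1) 0 * Mval (p+1) 2 - Mval (p+1) 1 * Mval (p+1) 1) / 8 ^ p := by
      simp only [Nval, hD]; norm_num; ring
    rw [e, hKey, div_self h80, if_pos rfl]
  · have e : Mval (p+1) (0+0) * Nval (p+1) 0 1 + Mval (p+1) (0+1) * Nval (p+1) 1 1
        = 0 := by
      simp only [Nval, hD]; norm_num; ring
    rw [e, if_neg (by norm_num)]
  · have e : Mval (p+1) (1+0) * Nval (p+1) 0 0 + Mval (p+1) (1+1) * Nval (p+1) 1 0
        = 0 := by
      simp only [Nval, hD]; norm_num; ring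
    rw [e, if_neg (by norm_num)]
  · have e : Mval (p+1) (1+0) * Nval (p+1) 0 1 + Mval (p+1) (1+1) * Nval (p+1) 1 1
        = (Mval (p+1) 0 * Mval (p+1) 2 - Mval (p+1) 1 * Mval (p+1) 1) / 8 ^ p := by
      simp only [Nval, hD]; norm_num; ring
    rw [e, hKey, div_self h80, if_pos rfl]

lemma RS (m : ℕ) (i k : ℕ) (hi : i < 2 ^ (m + 1)) (hk : k < 2 ^ (m + 1)) :
    ∑ t ∈ range (2 ^ (m + 1)),
      (if i - i % 2 = t - t % 2 then Mval (m + 1) (i % 2 + t % 2) else 0) *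
      (if t - t % 2 = k - k % 2 then Nval (m + 1) (t % 2) (k % 2) else 0)
    = if i = k then 1 else 0 := by
  have h2 : (2:ℕ) ^ (m + 1) = 2 * 2 ^ m := by rw [pow_succ]; ring
  obtain ⟨i', a, ha, hi', rfl⟩ : ∃ u a, a < 2 ∧ u < 2 ^ m ∧ i = 2 * u + a :=
    ⟨i / 2, i % 2, by omega, by omega, by omega⟩
  obtain ⟨k', b, hb, hk', rfl⟩ : ∃ w c, c < 2 ∧ w < 2 ^ m ∧ k = 2 * w + c :=
    ⟨k / 2, k % 2, by omega, by omega, by omega⟩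
  rw [h2, sum_double]
  simp only [show (2*i'+a) % 2 = a by omega, show (2*k'+b) % 2 = b by omega,
      show 2*i'+a - a = 2*i' by omega, show 2*k'+b - b = 2*k' by omega]
  by_cases hik : i' = k'
  · subst hik
    have step : ∀ j' ∈ range (2 ^ m),
        ((if 2*i' = 2*j' - (2*j') % 2 then Mval (m+1) (a + (2*j') % 2) else 0) *
          (if 2*j' - (2*j') % 2 = 2*i' then Nval (m+1) ((2*j') % 2) b else 0)
         + (if 2*i' = 2*j'+1 - (2*j'+1) % 2 then Mval (m+1) (a + (2*j'+1) % 2) else 0) *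
          (if 2*j'+1 - (2*j'+1) % 2 = 2*i' then Nval (m+1) ((2*j'+1) % 2) b else 0))
        = if j' = i' then
            (Mval (m+1) (a+0) * Nval (m+1) 0 b + Mval (m+1) (a+1) * Nval (m+1) 1 b)
          else 0 := by
      intro j' _
      simp only [show (2*j') % 2 = 0 by omega, show (2*j'+1) % 2 = 1 by omega,
        show 2*j' - 0 = 2*j' by omega, show 2*j'+1 - 1 = 2*j' by omega]
      by_cases h : j' = i'
      · subst h; simp
      · have h1 : (2*i' : ℕ) ≠ 2*j' := by omega
        have h2 : (2*j' : ℕ) ≠ 2*i' := by omega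
        simp [h1, h2, h]
    rw [Finset.sum_congr rfl step, Finset.sum_ite_eq' (range (2^m)) i'
        (fun _ => Mval (m+1) (a+0) * Nval (m+1) 0 b + Mval (m+1) (a+1) * Nval (m+1) 1 b),
      if_pos (Finset.mem_range.mpr hi'), MN m a b ha hb]
    by_cases hab : a = b
    · rw [if_pos hab, if_pos (by omega)]
    · rw [if_neg hab, if_neg (by omega)]
  · have step : ∀ j' ∈ range (2 ^ m),
        ((if 2*i' = 2*j' - (2*j') % 2 then Mval (m+1) (a + (2*j') % 2) else 0) *
          (if 2*j' - (2*j') % 2 = 2*k' then Nval (m+1) ((2*j') % 2) b else 0)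
         + (if 2*i' = 2*j'+1 - (2*j'+1) % 2 then Mval (m+1) (a + (2*j'+1) % 2) else 0) *
          (if 2*j'+1 - (2*j'+1) % 2 = 2*k' then Nval (m+1) ((2*j'+1) % 2) b else 0))
        = 0 := by
      intro j' _
      simp only [show (2*j') % 2 = 0 by omega, show (2*j'+1) % 2 = 1 by omega,
        show 2*j' - 0 = 2*j' by omega, show 2*j'+1 - 1 = 2*j' by omega]
      by_cases h : j' = k'
      · have h1 : (2*i' : ℕ) ≠ 2*j' := by omega
        simp [h1]
      · have h1 : (2*j' : ℕ) ≠ 2*k' := by omega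
        simp [h1]
    rw [Finset.sum_congr rfl step, Finset.sum_const_zero, if_neg (by omega)]

/-- For every `n ≥ 2`, the matrix `P` is invertible. -/
theorem stmt3 (n : ℕ) (hn : 2 ≤ n) : IsUnit (Pmat n) := by

  obtain ⟨m, rfl⟩ : ∃ m, n = m + 1 := ⟨n - 1, by omega⟩
  set S : Matrix (Fin (2 ^ (m+1))) (Fin (2 ^ (m+1))) ℝ := fun j k =>
    if (j:ℕ) - (j:ℕ) % 2 = (k:ℕ) - (k:ℕ) % 2 then Nval (m+1) ((j:ℕ) % 2) ((k:ℕ) % 2) else 0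
    with hS
  have hmul : Pmat (m+1) * (Pmat (m+1) * S) = 1 := by
    rw [← Matrix.mul_assoc]
    ext i k
    rw [Matrix.mul_apply]
    have hPP : ∀ j : Fin (2 ^ (m+1)), (Pmat (m+1) * Pmat (m+1)) i j
        = if (i:ℕ) - (i:ℕ) % 2 = (j:ℕ) - (j:ℕ) % 2
            then Mval (m+1) ((i:ℕ) % 2 + (j:ℕ) % 2) else 0 := by
      intro j
      rw [Matrix.mul_apply]
      have e1 : (∑ t : Fin (2 ^ (m+1)), Pmat (m+1) i t * Pmat (m+1) t j)
          = ∑ t ∈ range (2 ^ (m+1)), Pval (m+1) (i:ℕ) t * Pval (m+1) t (j:ℕ) :=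
        Fin.sum_univ_eq_sum_range (fun t => Pval (m+1) (i:ℕ) t * Pval (m+1) t (j:ℕ)) _
      rw [e1, Psq m (i:ℕ) (j:ℕ) i.isLt j.isLt]
    calc (∑ j : Fin (2 ^ (m+1)), (Pmat (m+1) * Pmat (m+1)) i j * S j k)
        = ∑ j : Fin (2 ^ (m+1)),
            (if (i:ℕ) - (i:ℕ) % 2 = (j:ℕ) - (j:ℕ) % 2
              then Mval (m+1) ((i:ℕ) % 2 + (j:ℕ) % 2) else 0) *
            (if (j:ℕ) - (j:ℕ) % 2 = (k:ℕ) - (k:ℕ) % 2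
              then Nval (m+1) ((j:ℕ) % 2) ((k:ℕ) % 2) else 0) := by
          exact Finset.sum_congr rfl (fun j _ => by rw [hPP j, hS])
      _ = ∑ t ∈ range (2 ^ (m+1)),
            (if (i:ℕ) - (i:ℕ) % 2 = t - t % 2
              then Mval (m+1) ((i:ℕ) % 2 + t % 2) else 0) *
            (if t - t % 2 = (k:ℕ) - (k:ℕ) % 2
              then Nval (m+1) (t % 2) ((k:ℕ) % 2) else 0) :=
          Fin.sum_univ_eq_sum_range (fun t =>
            (if (i:ℕ) - (i:ℕ) % 2 = t - t % 2
              then Mval (m+1) ((i:ℕ) % 2 + t % 2) else 0) *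
            (if t - t % 2 = (k:ℕ) - (k:ℕ) % 2
              then Nval (m+1) (t % 2) ((k:ℕ) % 2) else 0)) (2 ^ (m+1))
      _ = if (i:ℕ) = (k:ℕ) then 1 else 0 := RS m (i:ℕ) (k:ℕ) i.isLt k.isLt
      _ = (1 : Matrix (Fin (2 ^ (m+1))) (Fin (2 ^ (m+1))) ℝ) i k := by
          rw [Matrix.one_apply]
          by_cases h : i = k
          · rw [if_pos h, if_pos (by exact_mod_cast congrArg (Fin.val) h)]
          · rw [if_neg h, if_neg (fun hc => h (Fin.ext hc))]
  exact ⟨⟨Pmat (m+1), Pmat (m+1) * S, hmul, mul_eq_one_comm.mp hmul⟩, rfl⟩
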